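/- For every n ≥ 0, the n-th power of the matrix N = [[z, r, pr], [0, q+z, pq+r], [1, p, p²+q+z]] equals [[μₙ⁰, r·μₙ², r·μₙ¹ + pr·μₙ²], [μₙ¹, μₙ⁰ + q·μₙ², (pq+r)·μₙ² + q·μₙ¹], [μₙ², μₙ¹ + p·μₙ², μₙ⁰ + p·μₙ¹ + (p²+q)·μₙ²]], where μₙ⁰, μₙ¹, μₙ² are defined by the expansion (z+α²)ⁿ = μₙ⁰ + μₙ¹·α + μₙ²·α² in ℚ[α] = ℚ[x]/(x³-px²-qx-r) assuming x³-px²-qx-r is irreducible over ℚ. -/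

import Mathlib

open Polynomial in
lemma coords_unique_aux (p q r : ℚ)
    (hf : Irreducible (X^3 - C p * X^2 - C q * X - C r : ℚ[X]))
    (a b c : ℚ)
    (h : algebraMap ℚ (AdjoinRoot (X^3 - C p * X^2 - C q * X - C r : ℚ[X])) a
        + algebraMap ℚ _ b * AdjoinRoot.root (X^3 - C p * X^2 - C q * X - C r : ℚ[X])
        + algebraMap ℚ _ c * (AdjoinRoot.root (X^3 - C p * X^2 - C q * X - C r : ℚ[X]))^2 = 0) :
    a = 0 ∧ b = 0 ∧ c = 0 := by
  set f : ℚ[X] := X^3 - C p * X^2 - C q * X - C r with hfdef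
  haveI : Fact (Irreducible f) := ⟨hf⟩
  have hm : f.Monic := by unfold f; monicity!
  have hg : (Polynomial.aeval (AdjoinRoot.root f)) (C a + C b * X + C c * X^2) = 0 := by
    simpa [map_add, map_mul, map_pow] using h
  have hg0 : (C a + C b * X + C c * X^2 : ℚ[X]) = 0 := by
    by_contra hne
    have hdeg := minpoly.degree_le_of_ne_zero ℚ (AdjoinRoot.root f) hne hg
    rw [show minpoly ℚ (AdjoinRoot.root f) = f * C f.leadingCoeff⁻¹ from AdjoinRoot.minpoly_root hm.ne_zero, hm.leadingCoeff] at hdeg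
    simp only [map_one, inv_one, mul_one] at hdeg
    have h1 : (f : ℚ[X]).degree = 3 := by unfold f; compute_degree!
    have h2 : (C a + C b * X + C c * X^2 : ℚ[X]).degree ≤ 2 := by compute_degree
    rw [h1] at hdeg
    exact absurd (le_trans hdeg h2) (by norm_num)
  refine ⟨?_, ?_, ?_⟩
  · have := congrArg (fun g => Polynomial.coeff g 0) hg0; simpa using this
  · have := congrArg (fun g => Polynomial.coeff g 1) hg0; simpa using this
  · have := congrArg (fun g => Polynomial.coeff g 2) hg0; simpa using this

open Polynomial in
lemma root_cube_aux (p q r : ℚ) :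
    (AdjoinRoot.root (X^3 - C p * X^2 - C q * X - C r : ℚ[X]))^3
      = algebraMap ℚ _ p * (AdjoinRoot.root (X^3 - C p * X^2 - C q * X - C r : ℚ[X]))^2
        + algebraMap ℚ _ q * AdjoinRoot.root (X^3 - C p * X^2 - C q * X - C r : ℚ[X])
        + algebraMap ℚ _ r := by
  have h0 := AdjoinRoot.mk_self (f := (X^3 - C p * X^2 - C q * X - C r : ℚ[X]))
  simp only [map_sub, map_mul, map_pow, AdjoinRoot.mk_X, AdjoinRoot.mk_C,
    ← AdjoinRoot.algebraMap_eq] at h0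
  linear_combination h0

open Polynomial in
theorem pow_N_eq_cerruti (p q r z : ℚ)
    (hf : Irreducible (X^3 - C p * X^2 - C q * X - C r : ℚ[X]))
    (μ0 μ1 μ2 : ℕ → ℚ)
    (hμ : ∀ n : ℕ,
      (algebraMap ℚ (AdjoinRoot (X^3 - C p * X^2 - C q * X - C r : ℚ[X])) z
          + (AdjoinRoot.root (X^3 - C p * X^2 - C q * X - C r : ℚ[X]))^2)^n
        = algebraMap ℚ _ (μ0 n)
          + algebraMap ℚ _ (μ1 n) * AdjoinRoot.root (X^3 - C p * X^2 - C q * X - C r : ℚ[X])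
          + algebraMap ℚ _ (μ2 n) * (AdjoinRoot.root (X^3 - C p * X^2 - C q * X - C r : ℚ[X]))^2) :
    ∀ n : ℕ,
      (!![z, r, p*r; 0, q+z, p*q+r; 1, p, p^2+q+z] : Matrix (Fin 3) (Fin 3) ℚ)^n
        = !![μ0 n, r * μ2 n, r * μ1 n + p*r * μ2 n;
             μ1 n, μ0 n + q * μ2 n, (p*q+r) * μ2 n + q * μ1 n;
             μ2 n, μ1 n + p * μ2 n, μ0 n + p * μ1 n + (p^2+q) * μ2 n] := by
  have hroot := root_cube_aux p q r
  set f : ℚ[X] := X^3 - C p * X^2 - C q * X - C r with hfdef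
  set α := AdjoinRoot.root f with hα
  set φ := algebraMap ℚ (AdjoinRoot f) with hφ
  -- uniqueness of coordinates
  have uniq : ∀ a b c a' b' c' : ℚ,
      φ a + φ b * α + φ c * α^2 = φ a' + φ b' * α + φ c' * α^2 →
      a = a' ∧ b = b' ∧ c = c' := by
    intro a b c a' b' c' h
    have h' : φ (a - a') + φ (b - b') * α + φ (c - c') * α^2 = 0 := by
      simp only [map_sub]; ring_nf; ring_nf at h; rw [hφ]
      rw [hφ] at h
      push_cast [map_sub] at *
      linear_combination h
    obtain ⟨h1, h2, h3⟩ := coords_unique_aux p q r hf _ _ _ h'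
    exact ⟨by linarith [sub_eq_zero.mp h1], by linarith [sub_eq_zero.mp h2],
      by linarith [sub_eq_zero.mp h3]⟩
  have hroot' : α^3 = φ p * α^2 + φ q * α + φ r := hroot
  clear hroot
  rename' hroot' => hroot
  -- base case values
  have hbase : μ0 0 = 1 ∧ μ1 0 = 0 ∧ μ2 0 = 0 := by
    have h := (hμ 0).symm
    rw [pow_zero] at h
    have h' : φ (μ0 0) + φ (μ1 0) * α + φ (μ2 0) * α^2 = φ 1 + φ 0 * α + φ 0 * α^2 := by
      simpa using h
    exact uniq _ _ _ _ _ _ h'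
  -- recurrences
  have hrec : ∀ n : ℕ,
      μ0 (n+1) = z * μ0 n + r * μ1 n + p*r * μ2 n ∧
      μ1 (n+1) = (q+z) * μ1 n + (p*q+r) * μ2 n ∧
      μ2 (n+1) = μ0 n + p * μ1 n + (p^2+q+z) * μ2 n := by
    intro n
    have h := hμ (n+1)
    rw [pow_succ, hμ n] at h
    have h' : φ (μ0 (n+1)) + φ (μ1 (n+1)) * α + φ (μ2 (n+1)) * α^2
        = φ (z * μ0 n + r * μ1 n + p*r * μ2 n)
          + φ ((q+z) * μ1 n + (p*q+r) * μ2 n) * α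
          + φ (μ0 n + p * μ1 n + (p^2+q+z) * μ2 n) * α^2 := by
      rw [← h]
      simp only [map_add, map_mul, map_pow]
      have hr4 : α^4 = (φ p ^ 2 + φ q) * α^2 + (φ p * φ q + φ r) * α + φ p * φ r := by
        linear_combination (α + φ p) * hroot
      linear_combination (φ (μ1 n)) * hroot + (φ (μ2 n)) * hr4
    exact uniq _ _ _ _ _ _ h'
  intro n
  induction n with
  | zero =>
    obtain ⟨h0, h1, h2⟩ := hbase
    rw [pow_zero, Matrix.one_fin_three, h0, h1, h2]
    congr 1 <;> ring
  | succ n ih =>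
    obtain ⟨h0, h1, h2⟩ := hrec n
    rw [pow_succ, ih, Matrix.mul_fin_three, h0, h1, h2]
    congr 1 <;> ring
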